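/- Let h: [n] → [n] be a Hessenberg function, let p(h) := min{m : h(m) = m}, and for 1 ≤ s ≤ p(h) let r_s := min{m : h(m) ≥ s}. Define h^{(s)}: [n-1] → [n-1] by h^{(s)}(m) = h(m) if 1 ≤ m ≤ r_s - 1, h^{(s)}(m) = h(m) - 1 if r_s ≤ m ≤ s-1, and h^{(s)}(m) = h(m+1) - 1 if s ≤ m ≤ n-1. Then h^{(s)} is a Hessenberg function on [n-1] and r_s ≤ p(h^{(s)}) := min{m : h^{(s)}(m) = m}. -/
import Mathlib


open MvPolynomial

/-- The variable `x_m` (1-indexed) in `ℚ[x_1,…,x_n]`. -/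
noncomputable def xv (n : ℕ) (m : ℕ) : MvPolynomial (Fin n) ℚ :=
  if h : m - 1 < n then X ⟨m - 1, h⟩ else 0

/-- `f_{i,j} = ∑_{k=1}^{j} (∏_{ℓ=j+1}^{i} (x_k - x_ℓ)) x_k`. -/
noncomputable def fpoly (n i j : ℕ) : MvPolynomial (Fin n) ℚ :=
  ∑ k ∈ Finset.Icc 1 j, (∏ l ∈ Finset.Icc (j+1) i, (xv n k - xv n l)) * xv n k

/-- `g_{i,j} = ∑_{k=1}^{j} ∏_{ℓ=j+1}^{i} (x_k - x_ℓ)`. -/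
noncomputable def gpoly (n i j : ℕ) : MvPolynomial (Fin n) ℚ :=
  ∑ k ∈ Finset.Icc 1 j, ∏ l ∈ Finset.Icc (j+1) i, (xv n k - xv n l)

/-- `h` is a Hessenberg function on `{1,…,n}`. -/
def IsHessenberg (n : ℕ) (h : ℕ → ℕ) : Prop :=
  (∀ i, 1 ≤ i → i ≤ n → i ≤ h i ∧ h i ≤ n) ∧
  (∀ i, 1 ≤ i → i < n → h i ≤ h (i + 1))

/-- `h⁽ˢ⁾` is a Hessenberg function on `[n-1]` and `r_s ≤ p(h⁽ˢ⁾)`. -/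
theorem hs_isHessenberg_and_r_le_p (n : ℕ) (hn : 2 ≤ n) (h : ℕ → ℕ)
    (hh : IsHessenberg n h) (s : ℕ) (hs1 : 1 ≤ s)
    (hsp : s ≤ sInf {m | 1 ≤ m ∧ m ≤ n ∧ h m = m}) :
    let r := sInf {m | 1 ≤ m ∧ m ≤ n ∧ s ≤ h m}
    let hs : ℕ → ℕ := fun m =>
      if m ≤ r - 1 then h m else if m ≤ s - 1 then h m - 1 else h (m + 1) - 1
    IsHessenberg (n - 1) hs ∧ r ≤ sInf {m | 1 ≤ m ∧ m ≤ n - 1 ∧ hs m = m} := by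
  intro r hs
  obtain ⟨hb, hmono⟩ := hh
  have hmono' : ∀ a b, 1 ≤ a → a ≤ b → b ≤ n → h a ≤ h b := by
    intro a b ha
    induction b with
    | zero => intro hab _; exact absurd hab (by omega)
    | succ b ih =>
      intro hab hbn
      rcases Nat.lt_or_ge a (b + 1) with hlt | hge
      · have h1 : h a ≤ h b := ih (by omega) (by omega)
        have h2 : h b ≤ h (b + 1) := hmono b (by omega) (by omega)
        omega
      · have : a = b + 1 := by omega
        subst this; exact le_refl _
  have hnn := hb n (by omega) (le_refl n)
  have hp_le : sInf {m | 1 ≤ m ∧ m ≤ n ∧ h m = m} ≤ n :=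
    Nat.sInf_le ⟨by omega, le_refl n, by omega⟩
  have hsn : s ≤ n := le_trans hsp hp_le
  have hr_mem : r ∈ {m | 1 ≤ m ∧ m ≤ n ∧ s ≤ h m} :=
    Nat.sInf_mem ⟨n, ⟨by omega, le_refl n, by omega⟩⟩
  have hrs : r ≤ s := Nat.sInf_le ⟨hs1, hsn, (hb s hs1 hsn).1⟩
  have hr1 : 1 ≤ r := hr_mem.1
  have hr_def : r = sInf {m | 1 ≤ m ∧ m ≤ n ∧ s ≤ h m} := rfl
  have hbelow : ∀ m, 1 ≤ m → m < r → h m < s := by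
    intro m h1 h2
    by_contra hc
    push_neg at hc
    have : sInf {m | 1 ≤ m ∧ m ≤ n ∧ s ≤ h m} ≤ m :=
      Nat.sInf_le ⟨h1, by omega, hc⟩
    omega
  have habove : ∀ m, 1 ≤ m → m < s → m + 1 ≤ h m := by
    intro m h1 h2
    have hmn : m ≤ n := by omega
    have hge := (hb m h1 hmn).1
    rcases Nat.eq_or_lt_of_le hge with heq | hlt
    · exfalso
      have : sInf {m | 1 ≤ m ∧ m ≤ n ∧ h m = m} ≤ m :=
        Nat.sInf_le ⟨h1, hmn, heq.symm⟩
      omega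
    · omega
  have hafter : ∀ m, r ≤ m → m ≤ n → s ≤ h m := fun m h1 h2 =>
    le_trans hr_mem.2.2 (hmono' r m hr1 h1 h2)
  have hbounds : ∀ i, 1 ≤ i → i ≤ n - 1 → i ≤ hs i ∧ hs i ≤ n - 1 := by
    intro i h1 h2
    simp only [hs]
    split_ifs with c1 c2
    · have g1 := (hb i h1 (by omega)).1
      have g2 := hbelow i h1 (by omega)
      omega
    · have g1 := habove i h1 (by omega)
      have g2 := (hb i h1 (by omega)).2
      omega
    · have g1 := (hb (i + 1) (by omega) (by omega)).1
      have g2 := (hb (i + 1) (by omega) (by omega)).2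
      omega
  have hmon2 : ∀ i, 1 ≤ i → i < n - 1 → hs i ≤ hs (i + 1) := by
    intro i h1 h2
    simp only [hs]
    have f1 : h i ≤ h (i + 1) := hmono i h1 (by omega)
    have f2 : h (i + 1) ≤ h (i + 1 + 1) := hmono (i + 1) (by omega) (by omega)
    have f3 : r ≤ i ∨ h i < s := by
      rcases le_or_gt r i with hc | hc
      · exact Or.inl hc
      · exact Or.inr (hbelow i h1 hc)
    have f4 : i + 1 < r ∨ s ≤ h (i + 1) := by
      rcases lt_or_ge (i + 1) r with hc | hc
      · exact Or.inl hc
      · exact Or.inr (hafter (i + 1) hc (by omega))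
    rcases f3 with f3 | f3 <;> rcases f4 with f4 | f4 <;> split_ifs <;> omega
  refine ⟨⟨hbounds, hmon2⟩, ?_⟩
  have hne : (n - 1) ∈ {m | 1 ≤ m ∧ m ≤ n - 1 ∧ hs m = m} := by
    refine ⟨by omega, le_refl _, ?_⟩
    have := hbounds (n - 1) (by omega) (le_refl _)
    omega
  obtain ⟨g1, g2, g3⟩ := Nat.sInf_mem (⟨_, hne⟩ :
    Set.Nonempty {m | 1 ≤ m ∧ m ≤ n - 1 ∧ hs m = m})
  by_contra hc
  push_neg at hc
  set m := sInf {m | 1 ≤ m ∧ m ≤ n - 1 ∧ hs m = m} with hm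
  have e1 : hs m = h m := by simp only [hs]; rw [if_pos (by omega)]
  have e2 : h m = m := by omega
  have : sInf {m | 1 ≤ m ∧ m ≤ n ∧ h m = m} ≤ m := Nat.sInf_le ⟨g1, by omega, e2⟩
  omega
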